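/- For every η > 0 there exists Q₀ such that for all real Q ≥ Q₀, all real c, and every positive integer n with n ≤ Q², if τ(n) ≥ exp((2·log 2 − c)·(log Q)/(log log Q)), then every positive integer m with m² dividing n satisfies m ≤ Q^(c/(2·log 2 − log 3) + η). -/

import Mathlib

open Real Finset

private lemma three_pow_bound (b : ℕ) : (2 * b + 1 : ℝ) ≤ 3 ^ b := by
  induction b with
  | zero => norm_num
  | succ b ih =>
      have h3 : (1:ℝ) ≤ 3 ^ b := one_le_pow₀ (by norm_num)
      push_cast [pow_succ] at *
      nlinarith

private lemma two_pow_bound (c : ℕ) : (c + 1 : ℝ) ≤ 2 ^ c := by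
  have := Nat.lt_two_pow_self (n := c)
  exact_mod_cast this

private lemma per_prime {p : ℕ} (hp : p.Prime) {δ2 δ3 : ℝ}
    (h2 : Real.log 2 ≤ δ2 * Real.log p) (h3 : Real.log 3 ≤ δ3 * Real.log p)
    (b c : ℕ) :
    (2 * b + c + 1 : ℝ) ≤ (p : ℝ) ^ (δ3 * b) * (p : ℝ) ^ (δ2 * c) := by
  have hp0 : (0:ℝ) < p := by exact_mod_cast hp.pos
  have hδ3 : (3:ℝ) ≤ (p : ℝ) ^ δ3 := by
    rw [show (3:ℝ) = Real.exp (Real.log 3) by rw [Real.exp_log]; norm_num,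
      Real.rpow_def_of_pos hp0]
    exact Real.exp_le_exp.2 (by rw [mul_comm]; exact h3)
  have hδ2 : (2:ℝ) ≤ (p : ℝ) ^ δ2 := by
    rw [show (2:ℝ) = Real.exp (Real.log 2) by rw [Real.exp_log]; norm_num,
      Real.rpow_def_of_pos hp0]
    exact Real.exp_le_exp.2 (by rw [mul_comm]; exact h2)
  have e3 : (p : ℝ) ^ (δ3 * b) = ((p:ℝ) ^ δ3) ^ b := by
    rw [← Real.rpow_natCast ((p:ℝ) ^ δ3) b, ← Real.rpow_mul hp0.le]
  have e2 : (p : ℝ) ^ (δ2 * c) = ((p:ℝ) ^ δ2) ^ c := by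
    rw [← Real.rpow_natCast ((p:ℝ) ^ δ2) c, ← Real.rpow_mul hp0.le]
  rw [e3, e2]
  have hb : (2 * b + 1 : ℝ) ≤ ((p:ℝ) ^ δ3) ^ b :=
    le_trans (three_pow_bound b) (pow_le_pow_left₀ (by norm_num) hδ3 b)
  have hc : (c + 1 : ℝ) ≤ ((p:ℝ) ^ δ2) ^ c :=
    le_trans (two_pow_bound c) (pow_le_pow_left₀ (by norm_num) hδ2 c)
  have hb0 : (0:ℝ) ≤ 2 * b + 1 := by positivity
  have hc0 : (0:ℝ) ≤ c + 1 := by positivity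
  calc (2 * b + c + 1 : ℝ) ≤ (2 * b + 1) * (c + 1) := by nlinarith [hb0, hc0]
    _ ≤ ((p:ℝ) ^ δ3) ^ b * ((p:ℝ) ^ δ2) ^ c := by
        apply mul_le_mul hb hc hc0 (le_trans hb0 hb)

private lemma prod_pow_factorization_eq {m : ℕ} (hm : 0 < m) {s : Finset ℕ}
    (hs : m.primeFactors ⊆ s) :
    ∏ p ∈ s, (p : ℝ) ^ (m.factorization p) = (m : ℝ) := by
  have : ∏ p ∈ s, p ^ (m.factorization p) = m := by
    rw [← Finset.prod_subset hs (fun p _ hp => by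
      rw [Finsupp.notMem_support_iff.1 (by rwa [Nat.support_factorization]), pow_zero])]
    exact Nat.factorization_prod_pow_eq_self hm.ne'
  exact_mod_cast this

private lemma key_bound (δ2 δ3 T A : ℝ) (hδ2 : 0 ≤ δ2) (hδ3 : 0 ≤ δ3) (hT : 0 ≤ T)
    (hA : 1 ≤ A) (m k : ℕ) (hm : 0 < m) (hk : 0 < k)
    (h2 : ∀ p : ℕ, p.Prime → T ≤ (p:ℝ) → Real.log 2 ≤ δ2 * Real.log p)
    (h3 : ∀ p : ℕ, p.Prime → T ≤ (p:ℝ) → Real.log 3 ≤ δ3 * Real.log p)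
    (hA' : ∀ p ∈ (m^2*k).primeFactors, ((m^2*k).factorization p + 1 : ℝ) ≤ A) :
    (((m^2*k).divisors.card : ℕ) : ℝ) ≤ A ^ (T+1) * ((m:ℝ) ^ δ3 * (k:ℝ) ^ δ2) := by
  set n := m^2*k with hn
  have hn0 : n ≠ 0 := by positivity
  have hcast : ((n.divisors.card : ℕ) : ℝ)
      = ∏ p ∈ n.primeFactors, ((n.factorization p : ℝ) + 1) := by
    rw [Nat.card_divisors hn0]
    push_cast
    rfl
  rw [hcast]
  set s := n.primeFactors with hs
  set P : ℕ → Prop := fun p => (p:ℝ) < T with hP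
  have hsplit : ∏ p ∈ s, ((n.factorization p : ℝ) + 1)
      = (∏ p ∈ s.filter P, ((n.factorization p : ℝ) + 1)) *
        (∏ p ∈ s.filter (fun p => ¬ P p), ((n.factorization p : ℝ) + 1)) :=
    (Finset.prod_filter_mul_prod_filter_not s P _).symm
  have hcard : (((s.filter P).card : ℕ) : ℝ) ≤ T + 1 := by
    have hsub : s.filter P ⊆ Finset.range ⌈T⌉₊ := by
      intro p hp
      rw [Finset.mem_range, Nat.lt_ceil]
      exact (Finset.mem_filter.1 hp).2
    have h1 := Finset.card_le_card hsub
    rw [Finset.card_range] at h1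
    calc (((s.filter P).card : ℕ) : ℝ) ≤ (⌈T⌉₊ : ℝ) := by exact_mod_cast h1
      _ ≤ T + 1 := (Nat.ceil_lt_add_one hT).le
  have hb1 : ∏ p ∈ s.filter P, ((n.factorization p : ℝ) + 1) ≤ A ^ (T+1) := by
    calc ∏ p ∈ s.filter P, ((n.factorization p : ℝ) + 1)
        ≤ ∏ _p ∈ s.filter P, A :=
          Finset.prod_le_prod (fun p _ => by positivity)
            (fun p hp => hA' p (Finset.mem_of_mem_filter p hp))
      _ = A ^ (s.filter P).card := Finset.prod_const A
      _ = A ^ (((s.filter P).card : ℕ) : ℝ) := (Real.rpow_natCast A _).symm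
      _ ≤ A ^ (T + 1) := Real.rpow_le_rpow_of_exponent_le hA hcard
  have hafact : ∀ p, n.factorization p = 2 * m.factorization p + k.factorization p := by
    intro p
    rw [hn, Nat.factorization_mul (by positivity) hk.ne', Nat.factorization_pow]
    simp [two_mul]
  set g : ℕ → ℝ :=
    fun p => (p:ℝ) ^ (δ3 * m.factorization p) * (p:ℝ) ^ (δ2 * k.factorization p) with hg
  have hb2 : ∏ p ∈ s.filter (fun p => ¬ P p), ((n.factorization p : ℝ) + 1)
      ≤ (m:ℝ) ^ δ3 * (k:ℝ) ^ δ2 := by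
    have step1 : ∏ p ∈ s.filter (fun p => ¬ P p), ((n.factorization p : ℝ) + 1)
        ≤ ∏ p ∈ s.filter (fun p => ¬ P p), g p := by
      apply Finset.prod_le_prod (fun p _ => by positivity)
      intro p hp
      have hpmem := Finset.mem_of_mem_filter p hp
      have hpp : p.Prime := Nat.prime_of_mem_primeFactors hpmem
      have hTp : T ≤ (p : ℝ) := not_lt.1 (Finset.mem_filter.1 hp).2
      have hper := per_prime hpp (h2 p hpp hTp) (h3 p hpp hTp)
        (m.factorization p) (k.factorization p)
      rw [hafact p]
      push_cast
      push_cast at hper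
      simp only [hg]
      linarith [hper]
    have hgone : ∀ p ∈ s, (1:ℝ) ≤ g p := by
      intro p hps
      have hpp : p.Prime := Nat.prime_of_mem_primeFactors hps
      have hp1 : (1:ℝ) ≤ (p:ℝ) := by exact_mod_cast hpp.one_lt.le
      have g1 : (1:ℝ) ≤ (p:ℝ) ^ (δ3 * m.factorization p) :=
        Real.one_le_rpow hp1 (by positivity)
      have g2 : (1:ℝ) ≤ (p:ℝ) ^ (δ2 * k.factorization p) :=
        Real.one_le_rpow hp1 (by positivity)
      simp only [hg]
      nlinarith [g1, g2]
    have step2 : ∏ p ∈ s.filter (fun p => ¬ P p), g p ≤ ∏ p ∈ s, g p := by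
      have hsplitg : ∏ p ∈ s, g p
          = (∏ p ∈ s.filter P, g p) * (∏ p ∈ s.filter (fun p => ¬ P p), g p) :=
        (Finset.prod_filter_mul_prod_filter_not s P g).symm
      have h1 : (1:ℝ) ≤ ∏ p ∈ s.filter P, g p := by
        have := Finset.prod_le_prod (f := fun _ : ℕ => (1:ℝ)) (g := g)
          (s := s.filter P) (fun i _ => zero_le_one)
          (fun i hi => hgone i (Finset.mem_of_mem_filter i hi))
        simpa using this
      have h0 : (0:ℝ) ≤ ∏ p ∈ s.filter (fun p => ¬ P p), g p :=
        Finset.prod_nonneg (fun p hp => le_trans zero_le_one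
          (hgone p (Finset.mem_of_mem_filter p hp)))
      rw [hsplitg]
      exact le_mul_of_one_le_left h0 h1
    have hmd : m ∣ n := ⟨m * k, by rw [hn]; ring⟩
    have hkd : k ∣ n := ⟨m ^ 2, by rw [hn]; ring⟩
    have hms : m.primeFactors ⊆ s := Nat.primeFactors_mono hmd hn0
    have hks : k.primeFactors ⊆ s := Nat.primeFactors_mono hkd hn0
    have step3 : ∏ p ∈ s, g p = (m:ℝ) ^ δ3 * (k:ℝ) ^ δ2 := by
      rw [hg, Finset.prod_mul_distrib]
      congr 1
      · have e : ∀ p ∈ s, (p:ℝ) ^ (δ3 * m.factorization p)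
            = ((p:ℝ) ^ (m.factorization p)) ^ δ3 := by
          intro p hp
          have hp0 : (0:ℝ) ≤ p := Nat.cast_nonneg p
          rw [mul_comm, ← Real.rpow_natCast (p:ℝ) (m.factorization p),
            ← Real.rpow_mul hp0]
        rw [Finset.prod_congr rfl e,
          Real.finset_prod_rpow s _ (fun p _ => by positivity) δ3,
          prod_pow_factorization_eq hm hms]
      · have e : ∀ p ∈ s, (p:ℝ) ^ (δ2 * k.factorization p)
            = ((p:ℝ) ^ (k.factorization p)) ^ δ2 := by
          intro p hp
          have hp0 : (0:ℝ) ≤ p := Nat.cast_nonneg p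
          rw [mul_comm, ← Real.rpow_natCast (p:ℝ) (k.factorization p),
            ← Real.rpow_mul hp0]
        rw [Finset.prod_congr rfl e,
          Real.finset_prod_rpow s _ (fun p _ => by positivity) δ2,
          prod_pow_factorization_eq hk hks]
    calc ∏ p ∈ s.filter (fun p => ¬ P p), ((n.factorization p : ℝ) + 1)
        ≤ ∏ p ∈ s, g p := le_trans step1 step2
      _ = (m:ℝ) ^ δ3 * (k:ℝ) ^ δ2 := step3
  rw [hsplit]
  have hnn : (0:ℝ) ≤ ∏ p ∈ s.filter (fun p => ¬ P p), ((n.factorization p : ℝ) + 1) :=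
    Finset.prod_nonneg (fun p _ => by positivity)
  exact mul_le_mul hb1 hb2 hnn (by positivity)


private lemma final_contra (η D ε c w : ℝ) (hη : 0 < η) (hη1 : η ≤ 1)
    (hD14 : 1/4 ≤ D) (hD2 : D ≤ 2) (hεdef : ε = η * D / 12)
    (hw : D * w = c) (hclb : -(1/2) - 2*ε ≤ c)
    (hlt : -c < η*D/2 + 2*ε - (D+ε)*(w+η)) : False := by
  have hD0 : 0 < D := by linarith
  have hε0 : 0 < ε := by rw [hεdef]; positivity
  have key : D*η/2 + ε*w + ε*η < 2*ε := by nlinarith [hlt, hw]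
  have hDw_lb : -(1/2) - 2*ε ≤ D*w := by rw [hw]; exact hclb
  have hεDw := mul_le_mul_of_nonneg_left hDw_lb hε0.le
  have keyD := mul_lt_mul_of_pos_left key hD0
  have h5 : D^2*η/2 - ε/2 - 2*ε^2 + D*ε*η < 2*ε*D := by nlinarith [keyD, hεDw]
  rw [hεdef] at h5
  have hint1 : (0:ℝ) ≤ η*D*(8*D-1) :=
    mul_nonneg (mul_nonneg hη.le hD0.le) (by linarith)
  have hint2 : (0:ℝ) ≤ (η*D)^2 := sq_nonneg _
  nlinarith [h5, hint1, hint2]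

set_option maxHeartbeats 1000000 in
private lemma main_aux (η : ℝ) (hη : 0 < η) (hη1 : η ≤ 1) :
    ∃ Q₀ : ℝ, ∀ Q : ℝ, Q₀ ≤ Q → ∀ c : ℝ,
      ∀ n : ℕ, 0 < n → (n : ℝ) ≤ Q ^ 2 →
        (n.divisors.card : ℝ) ≥
          Real.exp ((2 * Real.log 2 - c) * (Real.log Q / Real.log (Real.log Q))) →
        ∀ m : ℕ, 0 < m → m ^ 2 ∣ n →
          (m : ℝ) ≤ Q ^ (c / (2 * Real.log 2 - Real.log 3) + η) := by
  have hl2 : (0.6931471803 : ℝ) < Real.log 2 := Real.log_two_gt_d9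
  have hl2' : Real.log 2 < 0.6931471808 := Real.log_two_lt_d9
  have hl3pos : (0:ℝ) < Real.log 3 := Real.log_pos (by norm_num)
  have hl23 : Real.log 2 ≤ Real.log 3 := Real.log_le_log (by norm_num) (by norm_num)
  set l2 := Real.log 2 with hl2def
  set l3 := Real.log 3 with hl3def
  set D := 2 * l2 - l3 with hDdef
  clear_value l2 l3
  have hD14 : 1/4 ≤ D := by
    have h34 : Real.log (3/4) ≤ 3/4 - 1 := Real.log_le_sub_one_of_pos (by norm_num)
    have e34 : Real.log (3/4) = l3 - 2 * l2 := by
      rw [Real.log_div (by norm_num) (by norm_num), hl3def, hl2def,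
        show (4:ℝ) = 2^2 by norm_num, Real.log_pow]
      push_cast; ring
    rw [hDdef]; linarith [e34 ▸ h34]
  have hl3_2 : l3 ≤ 2 := by linarith
  have hD0 : (0:ℝ) < D := by linarith
  have hD2 : D ≤ 2 := by rw [hDdef]; linarith
  set ε := η * D / 12 with hεdef
  clear_value D
  have hε0 : 0 < ε := by rw [hεdef]; positivity
  have hε1 : ε ≤ 1 := by
    have h12 : η * D ≤ 1 * 2 := mul_le_mul hη1 hD2 hD0.le zero_le_one
    rw [hεdef]; linarith
  set κ := ε / (2 * (l3 + ε)) with hκdef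
  clear_value ε
  have hκ0 : 0 < κ := by rw [hκdef]; positivity
  have hκl3 : κ * (l3 + ε) = ε / 2 := by
    rw [hκdef]; field_simp
  have hκhalf : κ ≤ 1/2 := by
    rw [hκdef, div_le_iff₀ (by positivity)]
    linarith
  clear_value κ
  set β := min (1/2 : ℝ) (η * D / 2) with hβdef
  have hβ0 : 0 < β := lt_min (by norm_num) (by positivity)
  -- eventual condition in x = log Q
  have hE4x : ∀ᶠ x : ℝ in Filter.atTop,
      (x ^ (1 - κ) + 1) * Real.log (4 * x) * Real.log x ≤ β * x := by
    have hlo := isLittleO_log_rpow_rpow_atTop (2 : ℝ) hκ0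
    have hbd := hlo.bound (show (0:ℝ) < β/8 by positivity)
    filter_upwards [hbd, Filter.eventually_ge_atTop (4:ℝ)] with x hx1 hx4
    have hx0 : (0:ℝ) < x := by linarith
    have hx1' : (1:ℝ) ≤ x := by linarith
    have hlx0 : (0:ℝ) ≤ Real.log x := Real.log_nonneg hx1'
    have hrp1 : (1:ℝ) ≤ x ^ (1 - κ) := Real.one_le_rpow hx1' (by linarith)
    have hrpκ0 : (0:ℝ) ≤ x ^ κ := Real.rpow_nonneg hx0.le κ
    have hlsq : (Real.log x)^2 ≤ β/8 * x ^ κ := by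
      rw [Real.norm_eq_abs, Real.norm_eq_abs, abs_of_nonneg hrpκ0,
        abs_of_nonneg (Real.rpow_nonneg hlx0 _)] at hx1
      have e2 : ((2:ℕ):ℝ) = (2:ℝ) := by norm_num
      rw [← Real.rpow_natCast (Real.log x) 2, e2]
      exact hx1
    have t2 : Real.log (4 * x) ≤ 2 * Real.log x := by
      rw [Real.log_mul (by norm_num) hx0.ne']
      have : Real.log 4 ≤ Real.log x := Real.log_le_log (by norm_num) hx4
      linarith
    have hl4x0 : (0:ℝ) ≤ Real.log (4 * x) := Real.log_nonneg (by linarith)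
    have hxx : x ^ κ * x ^ (1 - κ) = x := by
      rw [← Real.rpow_add hx0]; norm_num
    calc (x ^ (1 - κ) + 1) * Real.log (4 * x) * Real.log x
        ≤ (2 * x ^ (1-κ)) * (2 * Real.log x) * Real.log x := by
          apply mul_le_mul_of_nonneg_right _ hlx0
          apply mul_le_mul (by linarith) t2 hl4x0 (by linarith)
      _ = 4 * ((Real.log x)^2 * x ^ (1-κ)) := by ring
      _ ≤ 4 * ((β/8 * x ^ κ) * x ^ (1-κ)) := by
          apply mul_le_mul_of_nonneg_left _ (by norm_num)
          apply mul_le_mul_of_nonneg_right hlsq (by positivity)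
      _ = (β/2) * (x ^ κ * x ^ (1-κ)) := by ring
      _ = (β/2) * x := by rw [hxx]
      _ ≤ β * x := by linarith [mul_pos hβ0 hx0]
  have hEx : ∀ᶠ x : ℝ in Filter.atTop, 4 ≤ x ∧ 1 ≤ Real.log x ∧
      (x ^ (1 - κ) + 1) * Real.log (4 * x) * Real.log x ≤ β * x := by
    filter_upwards [Filter.eventually_ge_atTop (4:ℝ),
      Real.tendsto_log_atTop.eventually_ge_atTop 1, hE4x] with x h1 h2 h3
    exact ⟨h1, h2, h3⟩
  obtain ⟨Q₀, hQ₀⟩ := Filter.eventually_atTop.1 (Real.tendsto_log_atTop.eventually hEx)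
  refine ⟨max Q₀ 2, fun Q hQmax c n hn hnQ hτ m hm hdvd => ?_⟩
  have hQ2 : (2:ℝ) ≤ Q := le_trans (le_max_right _ _) hQmax
  have hQ0 : (0:ℝ) < Q := by linarith
  have hQ1 : (1:ℝ) < Q := by linarith
  obtain ⟨hx4, hL1, hE4⟩ := hQ₀ Q (le_trans (le_max_left _ _) hQmax)
  set x := Real.log Q with hxdef
  set L := Real.log x with hLdef
  clear_value β
  have hx0 : (0:ℝ) < x := by linarith
  have hL0 : (0:ℝ) < L := by linarith
  clear_value x L
  set T := x ^ (1 - κ) with hTdef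
  have hT1 : (1:ℝ) ≤ T := Real.one_le_rpow (by linarith) (by linarith)
  have hT0 : (0:ℝ) ≤ T := by linarith
  clear_value T
  set A := 4 * x with hAdef
  have hA1 : (1:ℝ) ≤ A := by rw [hAdef]; linarith
  have hA0 : (0:ℝ) < A := by linarith
  set δ2 := (l2 + ε) / L with hδ2def
  set δ3 := (l3 + ε) / L with hδ3def
  clear_value A δ2 δ3
  have hδ2_0 : 0 ≤ δ2 := by rw [hδ2def]; positivity
  have hδ3_0 : 0 ≤ δ3 := by rw [hδ3def]; positivity
  -- threshold conditions
  have hthr : ∀ p : ℕ, p.Prime → T ≤ (p:ℝ) →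
      l2 ≤ δ2 * Real.log p ∧ l3 ≤ δ3 * Real.log p := by
    intro p hpp hTp
    have hp0 : (0:ℝ) < p := by exact_mod_cast hpp.pos
    have hlogp : (1 - κ) * L ≤ Real.log p := by
      have h := Real.log_le_log (by linarith : (0:ℝ) < T) hTp
      rwa [hTdef, Real.log_rpow hx0, ← hLdef] at h
    have hlogp0 : 0 ≤ Real.log p := le_trans (mul_nonneg (by linarith) hL0.le) hlogp
    constructor
    · have h1 : δ2 * ((1 - κ) * L) ≤ δ2 * Real.log p :=
        mul_le_mul_of_nonneg_left hlogp hδ2_0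
      have e1 : δ2 * ((1 - κ) * L) = (l2 + ε) * (1 - κ) := by
        rw [hδ2def]; field_simp
      have h2 : κ * (l2 + ε) ≤ ε / 2 := by
        calc κ * (l2 + ε) ≤ κ * (l3 + ε) :=
              mul_le_mul_of_nonneg_left (by linarith) hκ0.le
          _ = ε / 2 := hκl3
      have h1' := e1 ▸ h1
      linarith [h1', h2, hε0]
    · have h1 : δ3 * ((1 - κ) * L) ≤ δ3 * Real.log p :=
        mul_le_mul_of_nonneg_left hlogp hδ3_0
      have e1 : δ3 * ((1 - κ) * L) = (l3 + ε) * (1 - κ) := by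
        rw [hδ3def]; field_simp
      have h1' := e1 ▸ h1
      linarith [h1', hκl3, hε0]
  -- bound on exponents
  have hA' : ∀ p ∈ n.primeFactors, ((n.factorization p : ℝ) + 1) ≤ A := by
    intro p hp
    have hpp := Nat.prime_of_mem_primeFactors hp
    have h2a : (2:ℕ) ^ (n.factorization p) ≤ n :=
      le_trans (Nat.pow_le_pow_left hpp.two_le _)
        (Nat.le_of_dvd hn (Nat.ordProj_dvd n p))
    have h2r : ((2:ℝ)) ^ (n.factorization p) ≤ (n:ℝ) := by exact_mod_cast h2a
    have hlog : (n.factorization p : ℝ) * l2 ≤ 2 * x := by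
      have h := Real.log_le_log (by positivity) (le_trans h2r hnQ)
      rw [Real.log_pow, Real.log_pow] at h
      push_cast at h
      rw [← hl2def, ← hxdef] at h
      exact h
    have hfp0 : (0:ℝ) ≤ (n.factorization p : ℝ) := Nat.cast_nonneg _
    have hmul := mul_le_mul_of_nonneg_left hl2.le hfp0
    rw [hAdef]
    linarith [hmul, hlog, hx4]
  -- the key bound, twice
  have h2' : ∀ p : ℕ, p.Prime → T ≤ (p:ℝ) → Real.log 2 ≤ δ2 * Real.log p := by
    intro p hp hT; rw [← hl2def]; exact (hthr p hp hT).1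
  have h3' : ∀ p : ℕ, p.Prime → T ≤ (p:ℝ) → Real.log 3 ≤ δ3 * Real.log p := by
    intro p hp hT; rw [← hl3def]; exact (hthr p hp hT).2
  obtain ⟨k, hkeq⟩ := hdvd
  have hk0 : 0 < k := by
    rcases Nat.eq_zero_or_pos k with h | h
    · rw [h, mul_zero] at hkeq; omega
    · exact h
  have hm0 : (0:ℝ) < (m:ℝ) := by exact_mod_cast hm
  have hk0' : (0:ℝ) < (k:ℝ) := by exact_mod_cast hk0
  have hn0' : (0:ℝ) < (n:ℝ) := by exact_mod_cast hn
  have hcardpos : 0 < n.divisors.card :=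
    Finset.card_pos.2 ⟨1, Nat.one_mem_divisors.2 hn.ne'⟩
  have hcard0 : (0:ℝ) < (n.divisors.card : ℝ) := by exact_mod_cast hcardpos
  have hτlog : (2 * l2 - c) * (x / L) ≤ Real.log (n.divisors.card) :=
    (Real.le_log_iff_exp_le hcard0).2 hτ
  have hm1 : (1:ℝ) ≤ (m:ℝ) := by exact_mod_cast hm
  have hk1 : (1:ℝ) ≤ (k:ℝ) := by exact_mod_cast hk0
  have hlm0 : 0 ≤ Real.log m := Real.log_nonneg hm1
  have hlk0 : 0 ≤ Real.log k := Real.log_nonneg hk1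
  have hln0 : 0 ≤ Real.log n := Real.log_nonneg (by exact_mod_cast hn)
  have hln2x : Real.log n ≤ 2 * x := by
    have h := Real.log_le_log hn0' hnQ
    rw [Real.log_pow] at h
    push_cast at h
    rw [← hxdef] at h
    exact h
  have hu0 : 0 ≤ (T+1) * Real.log A * L :=
    mul_nonneg (mul_nonneg (by linarith) (Real.log_nonneg hA1)) hL0.le
  have hβa : β ≤ 1/2 := by rw [hβdef]; exact min_le_left _ _
  have hβb : β ≤ η * D / 2 := by rw [hβdef]; exact min_le_right _ _
  have hE4a : (T+1) * Real.log A * L ≤ (1/2) * x :=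
    le_trans hE4 (mul_le_mul_of_nonneg_right hβa hx0.le)
  have hE4b : (T+1) * Real.log A * L ≤ (η * D / 2) * x :=
    le_trans hE4 (mul_le_mul_of_nonneg_right hβb hx0.le)
  -- second application of key bound with m = 1, to bound c from below
  have hmaster0 : (2 * l2 - c) * x ≤ (T+1) * Real.log A * L + (l2+ε) * Real.log n := by
    have hkey0 := key_bound δ2 δ3 T A hδ2_0 hδ3_0 hT0 hA1 1 n one_pos hn h2' h3'
      (by simpa using hA')
    simp only [one_pow, one_mul, Nat.cast_one, Real.one_rpow] at hkey0
    have hlog0 : Real.log (n.divisors.card) ≤ (T+1) * Real.log A + δ2 * Real.log n := by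
      have h := Real.log_le_log hcard0 hkey0
      rwa [Real.log_mul (by positivity) (Real.rpow_pos_of_pos hn0' δ2).ne',
        Real.log_rpow hA0, Real.log_rpow hn0'] at h
    have htot := le_trans hτlog hlog0
    have hmul := mul_le_mul_of_nonneg_right htot hL0.le
    have e1 : (2 * l2 - c) * (x / L) * L = (2 * l2 - c) * x := by
      field_simp
    have e2 : ((T+1) * Real.log A + δ2 * Real.log n) * L
        = (T+1) * Real.log A * L + (l2+ε) * Real.log n := by
      rw [hδ2def]; field_simp
    rw [e1, e2] at hmul
    exact hmul
  have hclb : -(1/2) - 2*ε ≤ c := by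
    have hmono := mul_le_mul_of_nonneg_left hln2x (show (0:ℝ) ≤ l2 + ε by linarith)
    have h1 : (2*l2-c)*x ≤ (1/2 + 2*(l2+ε))*x := by linarith [hmaster0, hE4a, hmono]
    have h2 : 2*l2-c ≤ 1/2 + 2*(l2+ε) := le_of_mul_le_mul_right h1 hx0
    linarith
  -- main application
  have hmaster1 : (2 * l2 - c) * x ≤ (T+1) * Real.log A * L
      + ((l3+ε) * Real.log m + (l2+ε) * Real.log k) := by
    have hkey1 := key_bound δ2 δ3 T A hδ2_0 hδ3_0 hT0 hA1 m k hm hk0 h2' h3'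
      (by rw [← hkeq]; exact hA')
    rw [← hkeq] at hkey1
    have hlog1 : Real.log (n.divisors.card)
        ≤ (T+1) * Real.log A + (δ3 * Real.log m + δ2 * Real.log k) := by
      have h := Real.log_le_log hcard0 hkey1
      rwa [Real.log_mul (by positivity)
          (mul_pos (Real.rpow_pos_of_pos hm0 δ3) (Real.rpow_pos_of_pos hk0' δ2)).ne',
        Real.log_mul (Real.rpow_pos_of_pos hm0 δ3).ne' (Real.rpow_pos_of_pos hk0' δ2).ne',
        Real.log_rpow hA0, Real.log_rpow hm0, Real.log_rpow hk0'] at h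
    have htot := le_trans hτlog hlog1
    have hmul := mul_le_mul_of_nonneg_right htot hL0.le
    have e1 : (2 * l2 - c) * (x / L) * L = (2 * l2 - c) * x := by
      field_simp
    have e2 : ((T+1) * Real.log A + (δ3 * Real.log m + δ2 * Real.log k)) * L
        = (T+1) * Real.log A * L + ((l3+ε) * Real.log m + (l2+ε) * Real.log k) := by
      rw [hδ2def, hδ3def]; field_simp
    rw [e1, e2] at hmul
    exact hmul
  -- case split on the size of the exponent
  by_cases hθ1 : 1 ≤ c / D + η
  · -- trivial case : m ≤ Q
    have hmn2 : ((m:ℝ))^2 ≤ Q^2 := by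
      have h := Nat.le_of_dvd hn ⟨k, hkeq⟩
      have h' : ((m^2 : ℕ) : ℝ) ≤ (n:ℝ) := by exact_mod_cast h
      push_cast at h'
      linarith
    have hmQ : (m:ℝ) ≤ Q := by
      have h := Real.sqrt_le_sqrt hmn2
      rwa [Real.sqrt_sq (Nat.cast_nonneg m), Real.sqrt_sq hQ0.le] at h
    calc (m:ℝ) ≤ Q := hmQ
      _ = Q ^ (1:ℝ) := (Real.rpow_one Q).symm
      _ ≤ Q ^ (c / D + η) := Real.rpow_le_rpow_of_exponent_le hQ1.le hθ1
  · push_neg at hθ1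
    by_contra hcon
    push_neg at hcon
    exfalso
    have hlmθ : (c/D + η) * x < Real.log m := by
      have h := Real.log_lt_log (Real.rpow_pos_of_pos hQ0 _) hcon
      rwa [Real.log_rpow hQ0, ← hxdef] at h
    have hlneq : Real.log n = 2 * Real.log m + Real.log k := by
      rw [hkeq]
      push_cast
      rw [Real.log_mul (by positivity) hk0'.ne', Real.log_pow]
      push_cast
      ring
    have hDε0 : (0:ℝ) < D + ε := by linarith
    have hst : (D+ε) * ((c/D + η) * x) < (D+ε) * Real.log m :=
      mul_lt_mul_of_pos_left hlmθ hDε0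
    have hmono2 : (l2+ε) * Real.log n ≤ (l2+ε) * (2*x) :=
      mul_le_mul_of_nonneg_left hln2x (by linarith)
    have hlkmul : (l2+ε) * Real.log k
        = (l2+ε) * Real.log n - 2*((l2+ε) * Real.log m) := by
      rw [hlneq]; ring
    have hDemul : (l3+ε) * Real.log m - 2*((l2+ε) * Real.log m)
        = -((D+ε) * Real.log m) := by
      rw [hDdef]; ring
    have h1 : (2*l2-c)*x < (η*D/2)*x + (l2+ε)*(2*x) - (D+ε)*((c/D+η)*x) := by
      linarith [hmaster1, hlkmul, hDemul, hst, hmono2, hE4b]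
    have h2 : (2*l2-c)*x < (η*D/2 + 2*(l2+ε) - (D+ε)*(c/D+η))*x := by
      linarith [h1]
    have h3 : 2*l2-c < η*D/2 + 2*(l2+ε) - (D+ε)*(c/D+η) :=
      lt_of_mul_lt_mul_right h2 hx0.le
    have hw : D * (c/D) = c := by field_simp
    exact final_contra η D ε c (c/D) hη hη1 hD14 hD2 hεdef hw hclb (by linarith [h3])

/-- For every η > 0 there exists Q₀ such that for all real Q ≥ Q₀, all real c, and
every positive integer n ≤ Q²: if τ(n) ≥ exp((2·log 2 − c)·(log Q)/(log log Q)), then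
every positive integer m with m² dividing n satisfies m ≤ Q^(c/(2·log 2 − log 3) + η). -/
theorem stmt_12 :
    ∀ η : ℝ, 0 < η → ∃ Q₀ : ℝ, ∀ Q : ℝ, Q₀ ≤ Q → ∀ c : ℝ,
      ∀ n : ℕ, 0 < n → (n : ℝ) ≤ Q ^ 2 →
        (n.divisors.card : ℝ) ≥
          Real.exp ((2 * Real.log 2 - c) * (Real.log Q / Real.log (Real.log Q))) →
        ∀ m : ℕ, 0 < m → m ^ 2 ∣ n →
          (m : ℝ) ≤ Q ^ (c / (2 * Real.log 2 - Real.log 3) + η) := by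
  intro η hη
  obtain ⟨Q₀, hQ₀⟩ := main_aux (min η 1) (lt_min hη one_pos) (min_le_right _ _)
  refine ⟨max Q₀ 1, fun Q hQ c n hn hnQ hτ m hm hdvd => ?_⟩
  have hQ1 : (1:ℝ) ≤ Q := le_trans (le_max_right _ _) hQ
  have h := hQ₀ Q (le_trans (le_max_left _ _) hQ) c n hn hnQ hτ m hm hdvd
  refine le_trans h (Real.rpow_le_rpow_of_exponent_le hQ1 ?_)
  have : min η 1 ≤ η := min_le_left _ _
  linarith
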